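/- Let σ² ≥ 0, L ≥ 0, τ ∈ [0,1], and α ∈ [0,1], and set A_k := Σ_{j=0}^k α^j for k ∈ ℕ. Define four sequences of reals V_f^S, V_r^S, V_f^D, V_r^D on ℕ, with the convention V_r^S(−1) = V_r^D(−1) = 0, by: V_f^S(t) = (1+tτ)·Σ_{i=0}^t A_{2(t−i)}²·(σ² + L²·V_r^S(i−1)) + (1+(t−1)τ)·Σ_{i=0}^{t−1} A_{2(t−i)−1}²·(σ² + L²·V_f^S(i)); V_r^S(t) = (1+tτ)·Σ_{i=0}^t A_{2(t−i)+1}²·(σ² + L²·V_r^S(i−1)) + (1+tτ)·Σ_{i=0}^t A_{2(t−i)}²·(σ² + L²·V_f^S(i)); V_f^D(t) = (1+tτ)·Σ_{i=0}^t A_{t−i}²·(σ² + L²·V_r^D(i−1)) + (1+(t−1)τ)·Σ_{i=0}^{t−1} A_{t−i−1}²·(σ² + L²·V_f^D(i)); V_r^D(t) = (1+tτ)·Σ_{i=0}^t A_{t−i}²·(σ² + L²·V_r^D(i−1)) + (1+tτ)·Σ_{i=0}^t A_{t−i}²·(σ² + L²·V_f^D(i)). Then for every t ∈ ℕ: V_f^D(t)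 ≤ V_f^S(t) and V_r^D(t) ≤ V_r^S(t). (That is, the worst-case parameter-variance bounds for the decoupled momentum scheme never exceed those of the shared momentum scheme.) -/

import Mathlib

/-- **Variance bound comparison for decoupled vs. shared momentum.** Let `σ² ≥ 0`,
`L ≥ 0`, `τ ∈ [0,1]`, `α ∈ [0,1]`, and `A_k = Σ_{j=0}^k α^j`. The worst-case
parameter-variance bounds `V_f^S, V_r^S` (shared momentum) and `V_f^D, V_r^D`
(decoupled momentum), defined by the stated recursions with the convention
`V_r^S(−1) = V_r^D(−1) = 0` (encoded via an `if i = 0` branch), satisfy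
`V_f^D(t) ≤ V_f^S(t)` and `V_r^D(t) ≤ V_r^S(t)` for every `t`. -/
theorem variance_bound_decoupled_le_shared
    (σ2 L τ α : ℝ) (hσ2 : 0 ≤ σ2) (hL : 0 ≤ L)
    (hτ0 : 0 ≤ τ) (hτ1 : τ ≤ 1) (hα0 : 0 ≤ α) (hα1 : α ≤ 1)
    (A : ℕ → ℝ) (hA : ∀ k, A k = ∑ j ∈ Finset.range (k + 1), α ^ j)
    (VfS VrS VfD VrD : ℕ → ℝ)
    (hVfS : ∀ t : ℕ, VfS t =
      (1 + (t : ℝ) * τ) * ∑ i ∈ Finset.range (t + 1),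
        A (2 * (t - i)) ^ 2 * (σ2 + L ^ 2 * (if i = 0 then 0 else VrS (i - 1)))
      + (1 + ((t : ℝ) - 1) * τ) * ∑ i ∈ Finset.range t,
        A (2 * (t - i) - 1) ^ 2 * (σ2 + L ^ 2 * VfS i))
    (hVrS : ∀ t : ℕ, VrS t =
      (1 + (t : ℝ) * τ) * ∑ i ∈ Finset.range (t + 1),
        A (2 * (t - i) + 1) ^ 2 * (σ2 + L ^ 2 * (if i = 0 then 0 else VrS (i - 1)))
      + (1 + (t : ℝ) * τ) * ∑ i ∈ Finset.range (t + 1),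
        A (2 * (t - i)) ^ 2 * (σ2 + L ^ 2 * VfS i))
    (hVfD : ∀ t : ℕ, VfD t =
      (1 + (t : ℝ) * τ) * ∑ i ∈ Finset.range (t + 1),
        A (t - i) ^ 2 * (σ2 + L ^ 2 * (if i = 0 then 0 else VrD (i - 1)))
      + (1 + ((t : ℝ) - 1) * τ) * ∑ i ∈ Finset.range t,
        A (t - i - 1) ^ 2 * (σ2 + L ^ 2 * VfD i))
    (hVrD : ∀ t : ℕ, VrD t =
      (1 + (t : ℝ) * τ) * ∑ i ∈ Finset.range (t + 1),
        A (t - i) ^ 2 * (σ2 + L ^ 2 * (if i = 0 then 0 else VrD (i - 1)))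
      + (1 + (t : ℝ) * τ) * ∑ i ∈ Finset.range (t + 1),
        A (t - i) ^ 2 * (σ2 + L ^ 2 * VfD i)) :
    ∀ t : ℕ, VfD t ≤ VfS t ∧ VrD t ≤ VrS t := by

  have hA0 : ∀ k, 0 ≤ A k := by
    intro k; rw [hA]
    exact Finset.sum_nonneg fun j _ => pow_nonneg hα0 j
  have hAmono : ∀ k m : ℕ, k ≤ m → A k ≤ A m := by
    intro k m h; rw [hA, hA]
    exact Finset.sum_le_sum_of_subset_of_nonneg
      (Finset.range_subset_range.mpr (by omega)) (fun j _ _ => pow_nonneg hα0 j)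
  have hfac1 : ∀ t : ℕ, (0:ℝ) ≤ 1 + (t : ℝ) * τ := by
    intro t; have : (0:ℝ) ≤ (t:ℝ) := Nat.cast_nonneg t; nlinarith
  have hfac2 : ∀ t : ℕ, (0:ℝ) ≤ 1 + ((t : ℝ) - 1) * τ := by
    intro t; have : (0:ℝ) ≤ (t:ℝ) := Nat.cast_nonneg t; nlinarith
  have hL2 : (0:ℝ) ≤ L ^ 2 := sq_nonneg L
  suffices H : ∀ t, (0 ≤ VfD t ∧ VfD t ≤ VfS t) ∧ (0 ≤ VrD t ∧ VrD t ≤ VrS t) by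
    intro t; exact ⟨(H t).1.2, (H t).2.2⟩
  intro t
  induction t using Nat.strong_induction_on with
  | _ t IH =>
    -- generic nonnegativity of second factors
    have hfD : 0 ≤ VfD t ∧ VfD t ≤ VfS t := by
      constructor
      · rw [hVfD]
        apply add_nonneg
        · apply mul_nonneg (hfac1 t)
          apply Finset.sum_nonneg; intro i hi
          have hv : 0 ≤ (if i = 0 then (0:ℝ) else VrD (i-1)) := by
            split
            · exact le_refl _
            · exact (IH (i-1) (by simp at hi; omega)).2.1
          exact mul_nonneg (sq_nonneg _)
            (add_nonneg hσ2 (mul_nonneg hL2 hv))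
        · apply mul_nonneg (hfac2 t)
          apply Finset.sum_nonneg; intro i hi
          have hv : 0 ≤ VfD i := (IH i (by simp at hi; omega)).1.1
          exact mul_nonneg (sq_nonneg _)
            (add_nonneg hσ2 (mul_nonneg hL2 hv))
      · rw [hVfD, hVfS]
        apply add_le_add
        · apply mul_le_mul_of_nonneg_left _ (hfac1 t)
          apply Finset.sum_le_sum; intro i hi
          have hv : 0 ≤ (if i = 0 then (0:ℝ) else VrD (i-1)) ∧
              (if i = 0 then (0:ℝ) else VrD (i-1)) ≤
                (if i = 0 then (0:ℝ) else VrS (i-1)) := by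
            split
            · exact ⟨le_refl _, le_refl _⟩
            · exact ⟨(IH (i-1) (by simp at hi; omega)).2.1,
                (IH (i-1) (by simp at hi; omega)).2.2⟩
          apply mul_le_mul
          · exact pow_le_pow_left₀ (hA0 _) (hAmono _ _ (by omega)) 2
          · exact add_le_add_right (mul_le_mul_of_nonneg_left hv.2 hL2) _
          · exact add_nonneg hσ2 (mul_nonneg hL2 hv.1)
          · exact sq_nonneg _
        · apply mul_le_mul_of_nonneg_left _ (hfac2 t)
          apply Finset.sum_le_sum; intro i hi
          have hv : 0 ≤ VfD i ∧ VfD i ≤ VfS i :=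
            ⟨(IH i (by simp at hi; omega)).1.1, (IH i (by simp at hi; omega)).1.2⟩
          apply mul_le_mul
          · exact pow_le_pow_left₀ (hA0 _) (hAmono _ _ (by omega)) 2
          · exact add_le_add_right (mul_le_mul_of_nonneg_left hv.2 hL2) _
          · exact add_nonneg hσ2 (mul_nonneg hL2 hv.1)
          · exact sq_nonneg _
    have hf : ∀ i, i ≤ t → 0 ≤ VfD i ∧ VfD i ≤ VfS i := by
      intro i hi
      rcases eq_or_lt_of_le hi with h | h
      · subst h; exact hfD
      · exact ⟨(IH i h).1.1, (IH i h).1.2⟩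
    refine ⟨hfD, ?_, ?_⟩
    · rw [hVrD]
      apply add_nonneg
      · apply mul_nonneg (hfac1 t)
        apply Finset.sum_nonneg; intro i hi
        have hv : 0 ≤ (if i = 0 then (0:ℝ) else VrD (i-1)) := by
          split
          · exact le_refl _
          · exact (IH (i-1) (by simp at hi; omega)).2.1
        exact mul_nonneg (sq_nonneg _) (add_nonneg hσ2 (mul_nonneg hL2 hv))
      · apply mul_nonneg (hfac1 t)
        apply Finset.sum_nonneg; intro i hi
        have hv : 0 ≤ VfD i := (hf i (by simp at hi; omega)).1
        exact mul_nonneg (sq_nonneg _) (add_nonneg hσ2 (mul_nonneg hL2 hv))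
    · rw [hVrD, hVrS]
      apply add_le_add
      · apply mul_le_mul_of_nonneg_left _ (hfac1 t)
        apply Finset.sum_le_sum; intro i hi
        have hv : 0 ≤ (if i = 0 then (0:ℝ) else VrD (i-1)) ∧
            (if i = 0 then (0:ℝ) else VrD (i-1)) ≤
              (if i = 0 then (0:ℝ) else VrS (i-1)) := by
          split
          · exact ⟨le_refl _, le_refl _⟩
          · exact ⟨(IH (i-1) (by simp at hi; omega)).2.1,
              (IH (i-1) (by simp at hi; omega)).2.2⟩
        apply mul_le_mul
        · exact pow_le_pow_left₀ (hA0 _) (hAmono _ _ (by omega)) 2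
        · exact add_le_add_right (mul_le_mul_of_nonneg_left hv.2 hL2) _
        · exact add_nonneg hσ2 (mul_nonneg hL2 hv.1)
        · exact sq_nonneg _
      · apply mul_le_mul_of_nonneg_left _ (hfac1 t)
        apply Finset.sum_le_sum; intro i hi
        have hv := hf i (by simp at hi; omega)
        apply mul_le_mul
        · exact pow_le_pow_left₀ (hA0 _) (hAmono _ _ (by omega)) 2
        · exact add_le_add_right (mul_le_mul_of_nonneg_left hv.2 hL2) _
        · exact add_nonneg hσ2 (mul_nonneg hL2 hv.1)
        · exact sq_nonneg _
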